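/- Let γ be a random variable with exponential density (1/P_γ)e^{−x/P_γ} on [0,∞) where P_γ > 0, and let I be a nonnegative bounded real random variable independent of γ. Let W, P_t^h, R, P_n > 0, κ > 0, β ≥ 2. Define C = W · ln(1 + (γ P_t^h/(κ^β R^β)) / (I + P_n)). Then E[C] = W · ∫_0^∞ (P_t^h P_γ e^{−P_n x} / (κ^β R^β + P_t^h P_γ x)) · E[e^{−x I}] dx. -/

import Mathlib

open MeasureTheory ProbabilityTheory Real Set

section FemtoAux

lemma exp_int {b : ℝ} (hb : 0 < b) :
    ∫ x in Set.Ioi (0:ℝ), Real.exp (-(b * x)) = 1 / b := by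
  have := integral_comp_mul_left_Ioi (fun x => Real.exp (-x)) 0 hb
  simp only [mul_zero, integral_exp_neg_Ioi, neg_zero, Real.exp_zero, smul_eq_mul, mul_one] at this
  rw [this, one_div]

lemma frullani_lintegral {p q : ℝ} (hp : 0 < p) (hq : 0 ≤ q) :
    ∫⁻ x in Set.Ioi (0:ℝ),
        ENNReal.ofReal ((Real.exp (-(p * x)) - Real.exp (-((p + q) * x))) / x)
      = ENNReal.ofReal (Real.log (1 + q / p)) := by
  rcases hq.eq_or_lt with rfl | hq
  · simp
  have hpq : p < p + q := by linarith
  have key : ∀ x ∈ Set.Ioi (0:ℝ),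
      (Real.exp (-(p * x)) - Real.exp (-((p + q) * x))) / x
        = ∫ t in Set.Ioc p (p + q), Real.exp (-(t * x)) := by
    intro x hx
    have hx0 : (0:ℝ) < x := hx
    rw [← intervalIntegral.integral_of_le hpq.le]
    have hderiv : ∀ t ∈ Set.uIcc p (p + q),
        HasDerivAt (fun t => -(Real.exp (-(t * x)) / x)) (Real.exp (-(t * x))) t := by
      intro t _
      have h1 : HasDerivAt (fun t : ℝ => -(t * x)) (-x) t := by
        simpa using ((hasDerivAt_id t).mul_const x).fun_neg
      have h2 := (h1.exp.div_const x).fun_neg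
      refine h2.congr_deriv ?_
      field_simp
    have hint : IntervalIntegrable (fun t => Real.exp (-(t * x))) volume p (p + q) := by
      apply Continuous.intervalIntegrable
      continuity
    rw [intervalIntegral.integral_eq_sub_of_hasDerivAt hderiv hint]
    ring
  calc ∫⁻ x in Set.Ioi (0:ℝ),
        ENNReal.ofReal ((Real.exp (-(p * x)) - Real.exp (-((p + q) * x))) / x)
      = ∫⁻ x in Set.Ioi (0:ℝ), ∫⁻ t in Set.Ioc p (p + q),
          ENNReal.ofReal (Real.exp (-(t * x))) := by
        apply setLIntegral_congr_fun measurableSet_Ioi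
        intro x hx
        beta_reduce
        rw [key x hx, ofReal_integral_eq_lintegral_ofReal]
        · exact (Continuous.integrableOn_Ioc (by continuity))
        · filter_upwards with t using Real.exp_nonneg _
    _ = ∫⁻ t in Set.Ioc p (p + q), ∫⁻ x in Set.Ioi (0:ℝ),
          ENNReal.ofReal (Real.exp (-(t * x))) := by
        apply lintegral_lintegral_swap
        apply Measurable.aemeasurable
        apply Measurable.ennreal_ofReal
        fun_prop
    _ = ∫⁻ t in Set.Ioc p (p + q), ENNReal.ofReal (1 / t) := by
        apply setLIntegral_congr_fun measurableSet_Ioc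
        intro t ht
        beta_reduce
        have htp : 0 < t := hp.trans ht.1
        rw [← ofReal_integral_eq_lintegral_ofReal]
        · rw [exp_int htp]
        · exact (by simpa using exp_neg_integrableOn_Ioi 0 htp :
            IntegrableOn (fun x => Real.exp (-(t * x))) (Set.Ioi 0))
        · filter_upwards with x using Real.exp_nonneg _
    _ = ENNReal.ofReal (Real.log (1 + q / p)) := by
        rw [← ofReal_integral_eq_lintegral_ofReal]
        · rw [← intervalIntegral.integral_of_le hpq.le, integral_one_div]
          · congr 1
            field_simp
          · intro h
            rw [Set.uIcc_of_le hpq.le] at h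
            linarith [h.1]
        · have h1 : IntervalIntegrable (fun t : ℝ => 1 / t) volume p (p + q) := by
            apply intervalIntegral.intervalIntegrable_one_div
            · intro t ht
              rw [Set.uIcc_of_le hpq.le] at ht
              exact (hp.trans_le ht.1).ne'
            · exact continuousOn_id
          exact (intervalIntegrable_iff_integrableOn_Ioc_of_le hpq.le).mp h1
        · filter_upwards [ae_restrict_mem measurableSet_Ioc] with t ht
          have := hp.trans ht.1
          positivity

lemma exp_moment {Ω : Type*} [MeasurableSpace Ω] (P : Measure Ω) [IsProbabilityMeasure P]
    {Pγ : ℝ} (hPγ : 0 < Pγ) {g : Ω → ℝ} (hgmeas : Measurable g)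
    (hglaw : Measure.map g P = volume.withDensity
      (fun x => ENNReal.ofReal (if 0 ≤ x then (1 / Pγ) * Real.exp (-x / Pγ) else 0)))
    {c : ℝ} (hc : 0 ≤ c) :
    ∫ ω, Real.exp (-(c * g ω)) ∂P = 1 / (1 + c * Pγ) := by
  set ρ : ℝ → ℝ := fun x => if 0 ≤ x then (1 / Pγ) * Real.exp (-x / Pγ) else 0 with hρ
  have hρmeas : Measurable ρ := by
    apply Measurable.ite measurableSet_Ici <;> fun_prop
  have h1 : ∫ ω, Real.exp (-(c * g ω)) ∂P
      = ∫ t, Real.exp (-(c * t)) ∂(Measure.map g P) := by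
    rw [integral_map hgmeas.aemeasurable]
    exact (Measurable.aestronglyMeasurable (by fun_prop))
  rw [h1, hglaw]
  have h2 : ∫ t, Real.exp (-(c * t))
        ∂(volume.withDensity fun x => ENNReal.ofReal (ρ x))
      = ∫ t, ((ρ t).toNNReal : ℝ) • Real.exp (-(c * t)) ∂volume := by
    exact integral_withDensity_eq_integral_smul hρmeas.real_toNNReal _
  rw [h2]
  have h3 : (fun t => ((ρ t).toNNReal : ℝ) • Real.exp (-(c * t)))
      = Set.indicator (Set.Ici 0) (fun t => (1 / Pγ) * Real.exp (-((1 / Pγ + c) * t))) := by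
    funext t
    by_cases ht : 0 ≤ t
    · rw [Set.indicator_of_mem (Set.mem_Ici.mpr ht)]
      have hρt : ρ t = (1 / Pγ) * Real.exp (-t / Pγ) := if_pos ht
      rw [smul_eq_mul, hρt, Real.coe_toNNReal _ (by positivity)]
      rw [mul_assoc, ← Real.exp_add]
      congr 2
      ring
    · rw [Set.indicator_of_notMem (by simpa using ht)]
      have hρt : ρ t = 0 := if_neg ht
      simp [hρt]
  rw [h3, integral_indicator measurableSet_Ici, integral_Ici_eq_integral_Ioi,
    integral_const_mul, exp_int (by positivity)]
  field_simp

end FemtoAux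

/-- Proposition 7: the average achievable rate of a femto user. With Rayleigh fading
channel power gain `γ` (exponential, mean `P_γ`) independent of the nonnegative
bounded interference `I`, the rate `C = W ln(1 + (γ P_t^h/(κ^β R^β))/(I + P_n))`
satisfies `E[C] = W ∫_0^∞ (P_t^h P_γ e^{−P_n x}/(κ^β R^β + P_t^h P_γ x)) E[e^{−xI}] dx`. -/
theorem femto_average_rate
    {Ω : Type*} [MeasurableSpace Ω] (P : Measure Ω) [IsProbabilityMeasure P]
    (W Pth R Pn Pγ κ β : ℝ)
    (hW : 0 < W) (hPth : 0 < Pth) (hR : 0 < R) (hPn : 0 < Pn) (hPγ : 0 < Pγ)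
    (hκ : 0 < κ) (hβ : 2 ≤ β)
    (g : Ω → ℝ) (hgmeas : Measurable g)
    (hglaw : Measure.map g P = volume.withDensity
      (fun x => ENNReal.ofReal (if 0 ≤ x then (1 / Pγ) * Real.exp (-x / Pγ) else 0)))
    (I : Ω → ℝ) (hImeas : Measurable I) (hInonneg : ∀ ω, 0 ≤ I ω)
    (hIbdd : ∃ M : ℝ, ∀ ω, I ω ≤ M)
    (hindep : IndepFun g I P)
    (C : Ω → ℝ)
    (hC : ∀ ω, C ω = W * Real.log (1 + g ω * Pth / (κ ^ β * R ^ β) / (I ω + Pn))) :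
    (∫ ω, C ω ∂P)
      = W * ∫ x in Set.Ioi (0 : ℝ),
          Pth * Pγ * Real.exp (-Pn * x) / (κ ^ β * R ^ β + Pth * Pγ * x)
            * ∫ ω, Real.exp (-x * I ω) ∂P := by
  have hK : 0 < κ ^ β * R ^ β := by positivity
  set K : ℝ := κ ^ β * R ^ β with hKdef
  set a : ℝ := Pth / K with hadef
  have ha : 0 < a := by positivity
  -- the Frullani integrand
  set F : Ω → ℝ → ℝ := fun ω x =>
    (Real.exp (-((I ω + Pn) * x)) - Real.exp (-(((I ω + Pn) + a * g ω) * x))) / x with hFdef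
  -- g is a.e. nonnegative
  have hg0 : ∀ᵐ ω ∂P, 0 ≤ g ω := by
    rw [ae_iff]
    have hset : {ω | ¬ 0 ≤ g ω} = g ⁻¹' (Set.Iio 0) := by
      ext ω; simp [not_le]
    rw [hset, ← Measure.map_apply hgmeas measurableSet_Iio, hglaw,
      withDensity_apply _ measurableSet_Iio]
    have : ∫⁻ x in Set.Iio (0:ℝ),
        ENNReal.ofReal (if 0 ≤ x then (1 / Pγ) * Real.exp (-x / Pγ) else 0)
        = ∫⁻ _ in Set.Iio (0:ℝ), 0 := by
      apply setLIntegral_congr_fun measurableSet_Iio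
      intro x (hx : x < 0)
      beta_reduce
      rw [if_neg (not_le.mpr hx)]
      simp
    rw [this]
    simp
  have hCmeas : Measurable C := by
    have : C = fun ω => W * Real.log (1 + g ω * Pth / (κ ^ β * R ^ β) / (I ω + Pn)) :=
      funext hC
    rw [this]
    exact measurable_const.mul (Real.measurable_log.comp (by fun_prop))
  have hCnonneg : 0 ≤ᵐ[P] C := by
    filter_upwards [hg0] with ω hgω
    rw [hC ω]
    have hz : 0 ≤ g ω * Pth / (κ ^ β * R ^ β) / (I ω + Pn) := by
      have := hInonneg ω
      positivity
    exact mul_nonneg hW.le (Real.log_nonneg (by linarith))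
  have hFumeas : Measurable (Function.uncurry fun ω x => ENNReal.ofReal (F ω x)) := by
    apply Measurable.ennreal_ofReal
    simp only [hFdef, Function.uncurry]
    fun_prop
  -- pointwise Frullani identity
  have hJ : ∀ᵐ ω ∂P, ENNReal.ofReal (C ω)
      = ENNReal.ofReal W * ∫⁻ x in Set.Ioi (0:ℝ), ENNReal.ofReal (F ω x) := by
    filter_upwards [hg0] with ω hgω
    have hp : 0 < I ω + Pn := by have := hInonneg ω; positivity
    have hq : 0 ≤ a * g ω := mul_nonneg ha.le hgω
    rw [hFdef]
    rw [frullani_lintegral hp hq, hC ω, ENNReal.ofReal_mul hW.le]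
    congr 3
    rw [hadef]
    ring
  -- interchange
  have hswap : ∫⁻ ω, (∫⁻ x in Set.Ioi (0:ℝ), ENNReal.ofReal (F ω x)) ∂P
      = ∫⁻ x in Set.Ioi (0:ℝ), (∫⁻ ω, ENNReal.ofReal (F ω x) ∂P) := by
    exact lintegral_lintegral_swap hFumeas.aemeasurable
  -- the inner ω-integral
  have hinner : ∀ x ∈ Set.Ioi (0:ℝ), (∫⁻ ω, ENNReal.ofReal (F ω x) ∂P)
      = ENNReal.ofReal (Pth * Pγ * Real.exp (-Pn * x) / (K + Pth * Pγ * x)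
          * ∫ ω, Real.exp (-x * I ω) ∂P) := by
    intro x hx
    have hx0 : (0:ℝ) < x := hx
    have hF2 : (fun ω => F ω x) = fun ω =>
        (Real.exp (-Pn * x) / x) *
          (Real.exp (-x * I ω) * (1 - Real.exp (-((a * x) * g ω)))) := by
      funext ω
      rw [hFdef]
      simp only
      rw [show -((I ω + Pn) * x) = -x * I ω + -Pn * x by ring,
        show -(((I ω + Pn) + a * g ω) * x) = (-x * I ω + -Pn * x) + -((a * x) * g ω) by ring]
      simp only [Real.exp_add]
      ring
    have hYmeas : Measurable fun ω => Real.exp (-x * I ω) := by fun_prop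
    have hXmeas : Measurable fun ω => 1 - Real.exp (-((a * x) * g ω)) := by fun_prop
    have hYbd : ∀ ω, Real.exp (-x * I ω) ≤ 1 := fun ω => by
      rw [Real.exp_le_one_iff]
      have := hInonneg ω
      simp only [neg_mul, neg_nonpos]
      positivity
    have hYnn : ∀ ω, 0 ≤ Real.exp (-x * I ω) := fun ω => Real.exp_nonneg _
    have hXint : Integrable (fun ω => 1 - Real.exp (-((a * x) * g ω))) P := by
      apply Integrable.mono' (integrable_const (1:ℝ)) hXmeas.aestronglyMeasurable
      filter_upwards [hg0] with ω hgω
      have h1 : Real.exp (-((a * x) * g ω)) ≤ 1 := by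
        rw [Real.exp_le_one_iff]
        simp only [neg_nonpos]
        positivity
      have h2 : 0 < Real.exp (-((a * x) * g ω)) := Real.exp_pos _
      rw [Real.norm_eq_abs, abs_le]
      constructor <;> nlinarith
    have hYint : Integrable (fun ω => Real.exp (-x * I ω)) P := by
      apply Integrable.mono' (integrable_const (1:ℝ)) hYmeas.aestronglyMeasurable
      filter_upwards with ω
      rw [Real.norm_eq_abs, abs_of_nonneg (hYnn ω)]
      exact hYbd ω
    have hFint : Integrable (fun ω => F ω x) P := by
      rw [hF2]
      apply Integrable.const_mul
      apply Integrable.mono' (integrable_const (1:ℝ))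
        (hYmeas.mul hXmeas).aestronglyMeasurable
      filter_upwards [hg0] with ω hgω
      have h1 : Real.exp (-((a * x) * g ω)) ≤ 1 := by
        rw [Real.exp_le_one_iff]
        simp only [neg_nonpos]
        positivity
      have h2 : 0 < Real.exp (-((a * x) * g ω)) := Real.exp_pos _
      rw [Real.norm_eq_abs, abs_le]
      simp only [Pi.mul_apply]
      constructor <;> nlinarith [hYbd ω, hYnn ω]
    have hFnn : 0 ≤ᵐ[P] fun ω => F ω x := by
      filter_upwards [hg0] with ω hgω
      simp only [Pi.zero_apply]
      rw [congrFun hF2 ω]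
      have h1 : Real.exp (-((a * x) * g ω)) ≤ 1 := by
        rw [Real.exp_le_one_iff]
        simp only [neg_nonpos]
        positivity
      have h2 : 0 ≤ 1 - Real.exp (-((a * x) * g ω)) := by linarith
      have h3 : 0 ≤ Real.exp (-Pn * x) / x := by positivity
      exact mul_nonneg h3 (mul_nonneg (hYnn ω) h2)
    rw [← ofReal_integral_eq_lintegral_ofReal hFint hFnn]
    congr 1
    -- compute the real integral using independence
    have hind2 : IndepFun (fun ω => Real.exp (-x * I ω))
        (fun ω => 1 - Real.exp (-((a * x) * g ω))) P := by
      exact hindep.symm.comp (φ := fun t : ℝ => Real.exp (-x * t))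
        (ψ := fun t : ℝ => 1 - Real.exp (-((a * x) * t))) (by fun_prop) (by fun_prop)
    calc ∫ ω, F ω x ∂P
        = ∫ ω, (Real.exp (-Pn * x) / x) *
            (Real.exp (-x * I ω) * (1 - Real.exp (-((a * x) * g ω)))) ∂P := by
          rw [← hF2]
      _ = (Real.exp (-Pn * x) / x) *
            ∫ ω, Real.exp (-x * I ω) * (1 - Real.exp (-((a * x) * g ω))) ∂P := by
          rw [integral_const_mul]
      _ = (Real.exp (-Pn * x) / x) *
            ((∫ ω, Real.exp (-x * I ω) ∂P) *
              ∫ ω, (1 - Real.exp (-((a * x) * g ω))) ∂P) := by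
          have hmul := hind2.integral_fun_mul_eq_mul_integral hYint.aestronglyMeasurable hXint.aestronglyMeasurable
          rw [show (∫ ω, Real.exp (-x * I ω) * (1 - Real.exp (-((a * x) * g ω))) ∂P)
            = (∫ ω, Real.exp (-x * I ω) ∂P) * ∫ ω, (1 - Real.exp (-((a * x) * g ω))) ∂P
            from hmul]
      _ = Pth * Pγ * Real.exp (-Pn * x) / (K + Pth * Pγ * x)
            * ∫ ω, Real.exp (-x * I ω) ∂P := by
          have hmom : ∫ ω, Real.exp (-((a * x) * g ω)) ∂P = 1 / (1 + (a * x) * Pγ) :=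
            exp_moment P hPγ hgmeas hglaw (by positivity)
          rw [integral_sub (integrable_const 1) (by
            apply Integrable.mono' (integrable_const (1:ℝ))
              (Measurable.aestronglyMeasurable (by fun_prop))
            filter_upwards [hg0] with ω hgω
            rw [Real.norm_eq_abs, abs_of_nonneg (Real.exp_nonneg _)]
            rw [Real.exp_le_one_iff]
            simp only [neg_nonpos]
            positivity), hmom]
          simp only [integral_const, measure_univ, probReal_univ, ENNReal.toReal_one, smul_eq_mul, one_mul]
          have h1 : (0:ℝ) < 1 + a * x * Pγ := by positivity
          have h2 : (0:ℝ) < K + Pth * Pγ * x := by positivity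
          rw [hadef]
          field_simp
          ring
  -- measurability of x ↦ ∫ ω, exp (-x * I ω)
  have hEImeas : StronglyMeasurable fun x : ℝ => ∫ ω, Real.exp (-x * I ω) ∂P := by
    apply StronglyMeasurable.integral_prod_right' (f := fun p : ℝ × Ω => Real.exp (-p.1 * I p.2))
    apply Measurable.stronglyMeasurable
    fun_prop
  -- RHS conversion
  have hRHS : ∫ x in Set.Ioi (0:ℝ),
        Pth * Pγ * Real.exp (-Pn * x) / (K + Pth * Pγ * x) * ∫ ω, Real.exp (-x * I ω) ∂P
      = (∫⁻ x in Set.Ioi (0:ℝ), ENNReal.ofReal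
          (Pth * Pγ * Real.exp (-Pn * x) / (K + Pth * Pγ * x)
            * ∫ ω, Real.exp (-x * I ω) ∂P)).toReal := by
    rw [integral_eq_lintegral_of_nonneg_ae]
    · filter_upwards [ae_restrict_mem measurableSet_Ioi] with x hx
      have hx0 : (0:ℝ) < x := hx
      have hEI : 0 ≤ ∫ ω, Real.exp (-x * I ω) ∂P :=
        integral_nonneg fun ω => Real.exp_nonneg _
      have h2 : (0:ℝ) < K + Pth * Pγ * x := by positivity
      positivity
    · apply AEStronglyMeasurable.mul _ (hEImeas.aestronglyMeasurable.restrict)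
      apply Measurable.aestronglyMeasurable
      fun_prop
  -- assemble
  rw [integral_eq_lintegral_of_nonneg_ae hCnonneg hCmeas.aestronglyMeasurable]
  rw [lintegral_congr_ae hJ, lintegral_const_mul' _ _ ENNReal.ofReal_ne_top, hswap]
  rw [setLIntegral_congr_fun measurableSet_Ioi hinner]
  rw [ENNReal.toReal_mul, ENNReal.toReal_ofReal hW.le, hRHS]
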